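/- arXiv:2501.01572 — 3 statements merged into one kernel-verified Lean document; each statement's English description precedes it below -/
import Mathlib

section
/- Let x₁ < x₂ in (0,1) have Engel-type expansions x_i = Σ_{k=1}^∞ ∏_{m=1}^k 1/(2+a_1(x_i)+⋯+a_m(x_i)−m), and suppose p is the first index where the digit sequences differ, with a_p(x₂) < a_p(x₁). Then |?_{EM}(x₂) − ?_{EM}(x₁)| < 2^{1 − a_1 − a_2 − ⋯ − a_{p−1} − a_p(x₂)}, where a_1,…,a_{p−1} denote the common initial digits. -/
/-- The Engel-type sum `x = ∑ₖ ∏_{m=1}^k 1/(2+a₁+⋯+a_m−m)` of a positive-integer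
digit sequence `(a_k)` (0-indexed). -/
noncomputable def engelSum (a : ℕ → ℕ) : ℝ :=
  ∑' k : ℕ, ∏ m ∈ Finset.range (k + 1),
    1 / (2 + (∑ i ∈ Finset.range (m + 1), (a i : ℝ)) - (m + 1))

/-- `?_{EM}` as a function of the digit sequence:
`F(a) = ∑ₖ (−1)^{k+1} 2^{1−a₁−⋯−a_k}` (0-indexed). -/
noncomputable def engelMinkowski (a : ℕ → ℕ) : ℝ :=
  ∑' k : ℕ, (-1 : ℝ) ^ k * (2 : ℝ) ^ ((1 : ℤ) - ∑ i ∈ Finset.range (k + 1), (a i : ℤ))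


open Finset

noncomputable def eS (c : ℕ → ℕ) (n : ℕ) : ℤ := ∑ i ∈ Finset.range (n+1), (c i : ℤ)
noncomputable def eT (c : ℕ → ℕ) (n : ℕ) : ℝ := (2:ℝ) ^ ((1:ℤ) - eS c n)
noncomputable def eU (c : ℕ → ℕ) (n : ℕ) : ℝ :=
  ∑' k : ℕ, (-1:ℝ)^k * (2:ℝ) ^ ((1:ℤ) - eS c (n + k))

lemma eS_ge (c : ℕ → ℕ) (hc : ∀ k, 1 ≤ c k) (n : ℕ) : (n:ℤ) + 1 ≤ eS c n := by
  have : ∑ i ∈ Finset.range (n+1), (1:ℤ) ≤ eS c n := by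
    apply Finset.sum_le_sum
    intro i _
    exact_mod_cast hc i
  simpa using this

lemma eS_succ (c : ℕ → ℕ) (n : ℕ) : eS c (n+1) = eS c n + c (n+1) := by
  simp [eS, Finset.sum_range_succ]

lemma eS_succ_ge (c : ℕ → ℕ) (hc : ∀ k, 1 ≤ c k) (n : ℕ) : eS c n + 1 ≤ eS c (n+1) := by
  rw [eS_succ]
  have : (1:ℤ) ≤ c (n+1) := by exact_mod_cast hc (n+1)
  linarith

lemma eS_add_ge (c : ℕ → ℕ) (hc : ∀ k, 1 ≤ c k) (n k : ℕ) : eS c n + k ≤ eS c (n + k) := by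
  induction k with
  | zero => simp
  | succ k ih =>
    have := eS_succ_ge c hc (n + k)
    push_cast
    push_cast at ih
    rw [show n + (k+1) = n + k + 1 from rfl]
    linarith

lemma eT_pos (c : ℕ → ℕ) (n : ℕ) : 0 < eT c n := zpow_pos (by norm_num) _

lemma eT_succ_le (c : ℕ → ℕ) (hc : ∀ k, 1 ≤ c k) (n : ℕ) : eT c (n+1) ≤ eT c n / 2 := by
  have h := eS_succ_ge c hc n
  have : eT c n / 2 = (2:ℝ) ^ ((1:ℤ) - eS c n - 1) := by
    rw [zpow_sub₀ (by norm_num : (2:ℝ) ≠ 0)]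
    norm_num [eT]
  rw [this, eT]
  apply zpow_le_zpow_right₀ (by norm_num : (1:ℝ) ≤ 2)
  omega

lemma term_bound (c : ℕ → ℕ) (hc : ∀ k, 1 ≤ c k) (n k : ℕ) :
    (2:ℝ) ^ ((1:ℤ) - eS c (n + k)) ≤ eT c n * (1/2)^k := by
  have h := eS_add_ge c hc n k
  have h2 : eT c n * (1/2:ℝ)^k = (2:ℝ) ^ ((1:ℤ) - eS c n - k) := by
    rw [zpow_sub₀ (by norm_num : (2:ℝ) ≠ 0), eT]
    rw [div_eq_mul_inv]
    congr 1
    rw [← inv_zpow, zpow_natCast]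
    norm_num
  rw [h2]
  apply zpow_le_zpow_right₀ (by norm_num : (1:ℝ) ≤ 2)
  omega

lemma summable_eU (c : ℕ → ℕ) (hc : ∀ k, 1 ≤ c k) (n : ℕ) :
    Summable (fun k : ℕ => (-1:ℝ)^k * (2:ℝ) ^ ((1:ℤ) - eS c (n + k))) := by
  apply Summable.of_norm
  have hg : Summable (fun k : ℕ => eT c n * (1/2:ℝ)^k) :=
    (summable_geometric_of_lt_one (by norm_num) (by norm_num)).mul_left _
  apply Summable.of_nonneg_of_le (fun k => norm_nonneg _) _ hg
  intro k
  have hpos : (0:ℝ) < (2:ℝ) ^ ((1:ℤ) - eS c (n + k)) := zpow_pos (by norm_num) _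
  rw [norm_mul, norm_pow, norm_neg, norm_one, one_pow, one_mul,
    Real.norm_eq_abs, abs_of_pos hpos]
  exact term_bound c hc n k

lemma abs_eU_le (c : ℕ → ℕ) (hc : ∀ k, 1 ≤ c k) (n : ℕ) : |eU c n| ≤ 2 * eT c n := by
  have h1 : |eU c n| ≤ ∑' k : ℕ, ‖(-1:ℝ)^k * (2:ℝ) ^ ((1:ℤ) - eS c (n + k))‖ := by
    rw [← Real.norm_eq_abs]
    exact norm_tsum_le_tsum_norm (summable_eU c hc n).norm
  have hg : Summable (fun k : ℕ => eT c n * (1/2:ℝ)^k) :=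
    (summable_geometric_of_lt_one (by norm_num) (by norm_num)).mul_left _
  have h2 : ∑' k : ℕ, ‖(-1:ℝ)^k * (2:ℝ) ^ ((1:ℤ) - eS c (n + k))‖ ≤
      ∑' k : ℕ, eT c n * (1/2:ℝ)^k := by
    apply Summable.tsum_le_tsum _ (summable_eU c hc n).norm hg
    intro k
    have hpos : (0:ℝ) < (2:ℝ) ^ ((1:ℤ) - eS c (n + k)) := zpow_pos (by norm_num) _
    rw [norm_mul, norm_pow, norm_neg, norm_one, one_pow, one_mul,
      Real.norm_eq_abs, abs_of_pos hpos]
    exact term_bound c hc n k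
  have h3 : ∑' k : ℕ, eT c n * (1/2:ℝ)^k = 2 * eT c n := by
    rw [tsum_mul_left, tsum_geometric_of_lt_one (by norm_num) (by norm_num)]
    ring
  linarith

lemma eU_rec (c : ℕ → ℕ) (hc : ∀ k, 1 ≤ c k) (n : ℕ) : eU c n = eT c n - eU c (n+1) := by
  have h := Summable.tsum_eq_zero_add (summable_eU c hc n)
  rw [eU, h]
  have : ∀ k : ℕ, (-1:ℝ)^(k+1) * (2:ℝ) ^ ((1:ℤ) - eS c (n + (k+1))) =
      -((-1:ℝ)^k * (2:ℝ) ^ ((1:ℤ) - eS c (n + 1 + k))) := by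
    intro k
    have hnk : n + (k+1) = n+1+k := by omega
    rw [pow_succ, hnk]
    ring
  rw [tsum_congr this, tsum_neg]
  simp only [pow_zero, Nat.add_zero, one_mul]
  rw [eT, eU]; ring

lemma eU_nonneg (c : ℕ → ℕ) (hc : ∀ k, 1 ≤ c k) (n : ℕ) : 0 ≤ eU c n := by
  rw [eU_rec c hc n]
  have h1 := abs_eU_le c hc (n+1)
  have h2 := eT_succ_le c hc n
  have h3 := abs_le.mp h1
  linarith

lemma eU_lower (c : ℕ → ℕ) (hc : ∀ k, 1 ≤ c k) (n : ℕ) :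
    eT c n - eT c (n+1) ≤ eU c n := by
  rw [eU_rec c hc n, eU_rec c hc (n+1)]
  have := eU_nonneg c hc (n+2)
  linarith

lemma eU_pos (c : ℕ → ℕ) (hc : ∀ k, 1 ≤ c k) (n : ℕ) : 0 < eU c n := by
  have h1 := eU_lower c hc n
  have h2 := eT_succ_le c hc n
  have h3 := eT_pos c n
  linarith

lemma eU_upper (c : ℕ → ℕ) (hc : ∀ k, 1 ≤ c k) (n : ℕ) : eU c n < eT c n := by
  rw [eU_rec c hc n]
  have := eU_pos c hc (n+1)
  linarith



lemma engelMinkowski_eq (c : ℕ → ℕ) (hc : ∀ k, 1 ≤ c k) (q : ℕ) :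
    engelMinkowski c = (∑ k ∈ Finset.range q, (-1:ℝ)^k * (2:ℝ)^((1:ℤ) - eS c k))
      + (-1:ℝ)^q * eU c q := by
  have hsum : Summable (fun k : ℕ => (-1:ℝ)^k * (2:ℝ)^((1:ℤ) - eS c k)) := by
    have := summable_eU c hc 0
    simpa using this
  have hsplit := Summable.sum_add_tsum_nat_add q hsum
  have htail : (∑' k : ℕ, (-1:ℝ)^(k+q) * (2:ℝ)^((1:ℤ) - eS c (k+q)))
      = (-1:ℝ)^q * eU c q := by
    rw [eU, ← tsum_mul_left]
    apply tsum_congr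
    intro k
    rw [pow_add]
    have : k + q = q + k := by omega
    rw [this]
    ring
  have : engelMinkowski c = ∑' k : ℕ, (-1:ℝ)^k * (2:ℝ)^((1:ℤ) - eS c k) := by
    rw [engelMinkowski]
    apply tsum_congr
    intro k
    rfl
  rw [this, ← hsplit, htail]

/-- If `x₁ < x₂` have Engel-type digit sequences `a`, `b` first differing at
position `p` with `b_p < a_p`, then
`|?_{EM}(x₂) − ?_{EM}(x₁)| < 2^{1 − a₁ − ⋯ − a_{p−1} − a_p(x₂)}`. -/
theorem engel_minkowski_difference_bound (a b : ℕ → ℕ)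
    (ha : ∀ k, 1 ≤ a k) (hb : ∀ k, 1 ≤ b k) (p : ℕ) (hp : 1 ≤ p)
    (hagree : ∀ i, i < p - 1 → a i = b i) (hdiff : b (p - 1) < a (p - 1))
    (hlt : engelSum a < engelSum b) :
    |engelMinkowski b - engelMinkowski a| <
      (2 : ℝ) ^ ((1 : ℤ) - ∑ i ∈ Finset.range p, (b i : ℤ)) := by
  obtain ⟨q, rfl⟩ : ∃ q, p = q + 1 := ⟨p - 1, by omega⟩
  have hq : q + 1 - 1 = q := rfl
  rw [hq] at hagree hdiff
  have hgoalT : (2 : ℝ) ^ ((1 : ℤ) - ∑ i ∈ Finset.range (q+1), (b i : ℤ)) = eT b q := rfl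
  rw [hgoalT]
  -- initial sums agree
  have hinit : (∑ k ∈ Finset.range q, (-1:ℝ)^k * (2:ℝ)^((1:ℤ) - eS a k))
      = ∑ k ∈ Finset.range q, (-1:ℝ)^k * (2:ℝ)^((1:ℤ) - eS b k) := by
    apply Finset.sum_congr rfl
    intro k hk
    rw [Finset.mem_range] at hk
    have : eS a k = eS b k := by
      apply Finset.sum_congr rfl
      intro i hi
      rw [Finset.mem_range] at hi
      rw [hagree i (by omega)]
    rw [this]
  have hdiffF : engelMinkowski b - engelMinkowski a = (-1:ℝ)^q * (eU b q - eU a q) := by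
    rw [engelMinkowski_eq a ha q, engelMinkowski_eq b hb q, hinit]
    ring
  rw [hdiffF, abs_mul, abs_pow, abs_neg, abs_one, one_pow, one_mul]
  -- key: eS b q + 1 ≤ eS a q
  have hSab : eS b q + 1 ≤ eS a q := by
    have h1 : eS a q = (∑ i ∈ Finset.range q, (b i : ℤ)) + a q := by
      rw [eS, Finset.sum_range_succ]
      congr 1
      apply Finset.sum_congr rfl
      intro i hi
      rw [Finset.mem_range] at hi
      rw [hagree i hi]
    have h2 : eS b q = (∑ i ∈ Finset.range q, (b i : ℤ)) + b q := by
      rw [eS, Finset.sum_range_succ]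
    have : (b q : ℤ) + 1 ≤ a q := by exact_mod_cast hdiff
    omega
  have hTa : eT a q ≤ eT b q / 2 := by
    have : eT b q / 2 = (2:ℝ) ^ ((1:ℤ) - eS b q - 1) := by
      rw [zpow_sub₀ (by norm_num : (2:ℝ) ≠ 0)]
      norm_num [eT]
    rw [this, eT]
    apply zpow_le_zpow_right₀ (by norm_num : (1:ℝ) ≤ 2)
    omega
  have hub : eU b q - eU a q < eT b q := by
    have := eU_upper b hb q
    have := eU_pos a ha q
    linarith
  have hlb : -(eT b q) < eU b q - eU a q := by
    have h1 := eU_lower b hb q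
    have h2 := eT_succ_le b hb q
    have h3 := eU_upper a ha q
    have h4 := eT_pos b q
    linarith
  rw [abs_lt]
  exact ⟨hlb, hub⟩
end

section
/- The function ?_{EM} is continuous on the set of points x ∈ (0,1) possessing an infinite Engel-type expansion x = Σ_{k=1}^∞ ∏_{m=1}^k 1/(2+a_1+⋯+a_m−m): if x_n → x with the first p(n) digits of x_n agreeing with those of x and p(n) → ∞, then ?_{EM}(x_n) → ?_{EM}(x). -/
noncomputable def emTerm (a : ℕ → ℕ) (k : ℕ) : ℝ :=
  (-1 : ℝ) ^ k * (2 : ℝ) ^ ((1 : ℤ) - ∑ i ∈ Finset.range (k + 1), (a i : ℤ))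

noncomputable def emBnd (N k : ℕ) : ℝ := if k < N then 0 else 2 * (1 / 2 : ℝ) ^ k

lemma emTerm_norm_le (a : ℕ → ℕ) (ha : ∀ k, 1 ≤ a k) (k : ℕ) :
    ‖emTerm a k‖ ≤ (1 / 2 : ℝ) ^ k := by
  have hsum : (k + 1 : ℤ) ≤ ∑ i ∈ Finset.range (k + 1), (a i : ℤ) := by
    calc (k + 1 : ℤ) = ∑ _i ∈ Finset.range (k + 1), (1 : ℤ) := by simp
    _ ≤ _ := Finset.sum_le_sum fun i _ => by exact_mod_cast ha i
  have hz : (1 : ℤ) - ∑ i ∈ Finset.range (k + 1), (a i : ℤ) ≤ -(k : ℤ) := by omega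
  have h1 : ‖emTerm a k‖ = (2 : ℝ) ^ ((1 : ℤ) - ∑ i ∈ Finset.range (k + 1), (a i : ℤ)) := by
    rw [emTerm, norm_mul, norm_pow, norm_neg, norm_one, one_pow, one_mul,
      Real.norm_eq_abs, abs_of_pos (zpow_pos (by norm_num) _)]
  rw [h1]
  calc (2 : ℝ) ^ ((1 : ℤ) - ∑ i ∈ Finset.range (k + 1), (a i : ℤ))
      ≤ (2 : ℝ) ^ (-(k : ℤ)) := zpow_le_zpow_right₀ (by norm_num) hz
  _ = (1 / 2 : ℝ) ^ k := by
      rw [zpow_neg, zpow_natCast, one_div, inv_pow]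

lemma emTerm_summable (a : ℕ → ℕ) (ha : ∀ k, 1 ≤ a k) :
    Summable (emTerm a) :=
  Summable.of_norm_bounded (g := fun k => (1 / 2 : ℝ) ^ k)
    (summable_geometric_of_lt_one (by norm_num) (by norm_num))
    (emTerm_norm_le a ha)

lemma emBnd_summable (N : ℕ) : Summable (emBnd N) := by
  apply Summable.of_norm_bounded (g := fun k => 2 * (1 / 2 : ℝ) ^ k)
    ((summable_geometric_of_lt_one (by norm_num) (by norm_num)).mul_left 2)
  intro k
  unfold emBnd
  by_cases h : k < N <;> simp [h]

lemma emBnd_tsum (N : ℕ) : ∑' k, emBnd N k = 4 * (1 / 2 : ℝ) ^ N := by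
  rw [← Summable.sum_add_tsum_nat_add N (emBnd_summable N)]
  have hz : ∑ i ∈ Finset.range N, emBnd N i = 0 :=
    Finset.sum_eq_zero fun i hi => by
      simp only [Finset.mem_range] at hi; simp [emBnd, hi]
  rw [hz, zero_add]
  have h : ∀ k, emBnd N (k + N) = (2 * (1 / 2 : ℝ) ^ N) * (1 / 2 : ℝ) ^ k := by
    intro k
    simp only [emBnd, if_neg (by omega : ¬ k + N < N), pow_add]
    ring
  simp_rw [h]
  rw [tsum_mul_left, tsum_geometric_of_lt_one (by norm_num) (by norm_num)]
  norm_num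
  ring

/-- Continuity of `?_{EM}` along digit-wise convergence: if `xₙ → x`, the first
`p(n)` digits of `xₙ` agree with those of `x`, and `p(n) → ∞`, then
`?_{EM}(xₙ) → ?_{EM}(x)`. -/
theorem engel_minkowski_continuous (A : ℕ → ℕ) (hA : ∀ k, 1 ≤ A k)
    (a : ℕ → ℕ → ℕ) (ha : ∀ n k, 1 ≤ a n k) (p : ℕ → ℕ)
    (hagree : ∀ n i, i < p n → a n i = A i)
    (hp : Filter.Tendsto p Filter.atTop Filter.atTop)
    (hx : Filter.Tendsto (fun n => engelSum (a n)) Filter.atTop (nhds (engelSum A))) :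
    Filter.Tendsto (fun n => engelMinkowski (a n)) Filter.atTop
      (nhds (engelMinkowski A)) := by
  have hsumA := emTerm_summable A hA
  rw [← tendsto_sub_nhds_zero_iff]
  have key : ∀ n, ‖engelMinkowski (a n) - engelMinkowski A‖ ≤ 4 * (1 / 2 : ℝ) ^ (p n) := by
    intro n
    have hsa := emTerm_summable (a n) (ha n)
    have hdiff : engelMinkowski (a n) - engelMinkowski A
        = ∑' k, (emTerm (a n) k - emTerm A k) := (Summable.tsum_sub hsa hsumA).symm
    have hbound : ∀ k, ‖emTerm (a n) k - emTerm A k‖ ≤ emBnd (p n) k := by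
      intro k
      by_cases h : k < p n
      · have heq : emTerm (a n) k = emTerm A k := by
          unfold emTerm
          have hs : ∑ i ∈ Finset.range (k + 1), (a n i : ℤ)
              = ∑ i ∈ Finset.range (k + 1), (A i : ℤ) := by
            apply Finset.sum_congr rfl
            intro i hi
            simp only [Finset.mem_range] at hi
            rw [hagree n i (by omega)]
          rw [hs]
        simp [emBnd, h, heq]
      · simp only [emBnd, if_neg h]
        calc ‖emTerm (a n) k - emTerm A k‖ ≤ ‖emTerm (a n) k‖ + ‖emTerm A k‖ :=
              norm_sub_le _ _
        _ ≤ (1 / 2 : ℝ) ^ k + (1 / 2 : ℝ) ^ k :=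
              add_le_add (emTerm_norm_le _ (ha n) k) (emTerm_norm_le _ hA k)
        _ = 2 * (1 / 2 : ℝ) ^ k := by ring
    have h1 : ‖∑' k, (emTerm (a n) k - emTerm A k)‖ ≤ ∑' k, emBnd (p n) k :=
      tsum_of_norm_bounded (emBnd_summable (p n)).hasSum hbound
    rw [hdiff]
    calc _ ≤ ∑' k, emBnd (p n) k := h1
    _ = _ := emBnd_tsum (p n)
  apply squeeze_zero_norm key
  have : Filter.Tendsto (fun m : ℕ => 4 * (1 / 2 : ℝ) ^ m) Filter.atTop (nhds 0) := by
    have := tendsto_pow_atTop_nhds_zero_of_lt_one (by norm_num : (0:ℝ) ≤ 1/2) (by norm_num)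
    simpa using this.const_mul 4
  exact this.comp hp
end

section
/- The function ?_{EM} is nowhere monotonic on (0,1): in every subinterval there exist points x₁ < x₂ with ?_{EM}(x₁) < ?_{EM}(x₂) and points y₁ < y₂ with ?_{EM}(y₁) > ?_{EM}(y₂). More precisely, if x₁ < x₂ first differ at digit position p with a_p(x₂) < a_p(x₁), then ?_{EM}(x₂) − ?_{EM}(x₁) > 0 when p is odd and ?_{EM}(x₂) − ?_{EM}(x₁) < 0 when p is even. -/
open Classical in
/-- `?_{EM}` as a function on `(0,1)`: evaluate `F` on a digit sequence of `x`. -/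
noncomputable def EM (x : ℝ) : ℝ :=
  if h : ∃ a : ℕ → ℕ, (∀ k, 1 ≤ a k) ∧ engelSum a = x then engelMinkowski h.choose
  else 0

namespace EMAux

def Q (a : ℕ → ℕ) (m : ℕ) : ℕ := 2 + ∑ i ∈ Finset.range (m + 1), (a i - 1)

lemma two_le_Q (a : ℕ → ℕ) (m : ℕ) : 2 ≤ Q a m := Nat.le_add_right _ _

lemma Q_succ (a : ℕ → ℕ) (m : ℕ) : Q a (m + 1) = Q a m + (a (m + 1) - 1) := by
  simp [Q, Finset.sum_range_succ, Nat.add_assoc]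

lemma Q_mono (a : ℕ → ℕ) : Monotone (Q a) :=
  monotone_nat_of_le_succ fun m => by rw [Q_succ]; omega

lemma Q_congr {a b : ℕ → ℕ} {j : ℕ} (h : ∀ i < j, a i = b i) {m : ℕ} (hm : m < j) :
    Q a m = Q b m := by
  unfold Q
  congr 1
  exact Finset.sum_congr rfl fun i hi => by
    rw [h i (lt_of_lt_of_le (Finset.mem_range.mp hi) hm)]

lemma Q_cast {a : ℕ → ℕ} (ha : ∀ k, 1 ≤ a k) (m : ℕ) :
    (Q a m : ℝ) = 2 + (∑ i ∈ Finset.range (m + 1), (a i : ℝ)) - (m + 1) := by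
  have : (∑ i ∈ Finset.range (m + 1), ((a i - 1 : ℕ) : ℝ))
      = ∑ i ∈ Finset.range (m + 1), ((a i : ℝ) - 1) :=
    Finset.sum_congr rfl fun i _ => by
      rw [Nat.cast_sub (ha i)]; norm_num
  rw [Q]
  push_cast [this, Finset.sum_sub_distrib, Finset.sum_const, Finset.card_range]
  ring

noncomputable def H (a : ℕ → ℕ) (j : ℕ) : ℝ := ∏ m ∈ Finset.range j, (1 / (Q a m : ℝ))

lemma H_pos (a : ℕ → ℕ) (j : ℕ) : 0 < H a j :=
  Finset.prod_pos fun m _ => by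
    have := two_le_Q a m; positivity

lemma H_succ (a : ℕ → ℕ) (j : ℕ) : H a (j + 1) = H a j * (1 / (Q a j : ℝ)) := by
  rw [H, Finset.prod_range_succ]; rfl

lemma H_le (a : ℕ → ℕ) (j : ℕ) : H a j ≤ (1 / 2) ^ j := by
  unfold H
  calc ∏ m ∈ Finset.range j, (1 / (Q a m : ℝ)) ≤ ∏ m ∈ Finset.range j, (1 / 2 : ℝ) := by
        apply Finset.prod_le_prod
        · intro m _; have := two_le_Q a m; positivity
        · intro m _
          have h2 : (2 : ℝ) ≤ (Q a m : ℝ) := by exact_mod_cast two_le_Q a m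
          rw [div_le_div_iff₀ (by linarith) (by norm_num)]
          linarith
    _ = (1 / 2) ^ j := by rw [Finset.prod_const, Finset.card_range]

lemma H_congr {a b : ℕ → ℕ} {j : ℕ} (h : ∀ i < j, a i = b i) {m : ℕ} (hm : m ≤ j) :
    H a m = H b m :=
  Finset.prod_congr rfl fun i hi => by
    rw [Q_congr h (lt_of_lt_of_le (Finset.mem_range.mp hi) hm)]

lemma summable_H (a : ℕ → ℕ) : Summable (fun k => H a (k + 1)) :=
  Summable.of_nonneg_of_le (fun k => (H_pos a (k + 1)).le)
    (fun k => (H_le a (k + 1)).trans (by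
      apply pow_le_pow_of_le_one (by norm_num) (by norm_num); omega))
    (summable_geometric_of_lt_one (by norm_num) (by norm_num))

lemma engelSum_eq {a : ℕ → ℕ} (ha : ∀ k, 1 ≤ a k) :
    engelSum a = ∑' k : ℕ, H a (k + 1) := by
  unfold engelSum H
  congr 1
  funext k
  exact Finset.prod_congr rfl fun m _ => by rw [Q_cast ha m]


lemma Q_def (a : ℕ → ℕ) (m : ℕ) : Q a m = 2 + ∑ i ∈ Finset.range (m + 1), (a i - 1) := rfl

lemma H_zero (a : ℕ → ℕ) : H a 0 = 1 := by simp [H]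

lemma H_def (a : ℕ → ℕ) (j : ℕ) : H a j = ∏ m ∈ Finset.range j, (1 / (Q a m : ℝ)) := rfl


lemma Q_pos_real (a : ℕ → ℕ) (m : ℕ) : (0 : ℝ) < (Q a m : ℝ) := by
  have := two_le_Q a m; exact_mod_cast by omega

lemma summable_tail (a : ℕ → ℕ) (j : ℕ) : Summable (fun k => H a (k + j + 1)) :=
  (summable_nat_add_iff (f := fun k => H a (k + 1)) j).mpr (summable_H a)

lemma H_tail_le (a : ℕ → ℕ) (j k : ℕ) :
    H a (k + j + 1) ≤ H a j * (1 / (Q a j : ℝ)) ^ (k + 1) := by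
  induction k with
  | zero => rw [H_succ]; simp
  | succ n ih =>
      have h1 : H a (n + 1 + j + 1) = H a (n + j + 1) * (1 / (Q a (n + j + 1) : ℝ)) := by
        rw [← H_succ]; ring_nf
      rw [h1]
      have hq : (1 / (Q a (n + j + 1) : ℝ)) ≤ 1 / (Q a j : ℝ) := by
        apply one_div_le_one_div_of_le (Q_pos_real a j)
        exact_mod_cast Q_mono a (by omega)
      calc H a (n + j + 1) * (1 / (Q a (n + j + 1) : ℝ))
          ≤ (H a j * (1 / (Q a j : ℝ)) ^ (n + 1)) * (1 / (Q a j : ℝ)) := by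
            have h1 := H_pos a j
            have h2 := Q_pos_real a (n + j + 1)
            have h3 := Q_pos_real a j
            apply mul_le_mul ih hq (by positivity) (by positivity)
        _ = H a j * (1 / (Q a j : ℝ)) ^ (n + 1 + 1) := by ring

lemma tail_le (a : ℕ → ℕ) (j : ℕ) :
    ∑' k : ℕ, H a (k + j + 1) ≤ H a j / ((Q a j : ℝ) - 1) := by
  have hq : (2 : ℝ) ≤ (Q a j : ℝ) := by exact_mod_cast two_le_Q a j
  have hc0 : (0:ℝ) < 1 / (Q a j : ℝ) := by positivity
  have hc1 : 1 / (Q a j : ℝ) < 1 := by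
    rw [div_lt_one (by linarith)]; linarith
  have hsum : Summable (fun k : ℕ => H a j * (1 / (Q a j : ℝ)) ^ (k + 1)) := by
    apply Summable.mul_left
    exact (summable_nat_add_iff 1).mpr (summable_geometric_of_lt_one hc0.le hc1)
  calc ∑' k : ℕ, H a (k + j + 1) ≤ ∑' k : ℕ, H a j * (1 / (Q a j : ℝ)) ^ (k + 1) :=
        Summable.tsum_le_tsum (H_tail_le a j) (summable_tail a j) hsum
    _ = H a j * ∑' k : ℕ, (1 / (Q a j : ℝ)) * (1 / (Q a j : ℝ)) ^ k := by
        rw [tsum_mul_left]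
        congr 1
        exact tsum_congr fun k => by rw [pow_succ]; ring
    _ = H a j * ((1 / (Q a j : ℝ)) * (1 - 1 / (Q a j : ℝ))⁻¹) := by
        rw [tsum_mul_left, tsum_geometric_of_lt_one hc0.le hc1]
    _ = H a j / ((Q a j : ℝ) - 1) := by
        have h3 := Q_pos_real a j
        rw [one_sub_div (by linarith), inv_div]
        have h4 : (Q a j : ℝ) - 1 ≠ 0 := by linarith
        field_simp


lemma tail_pos (a : ℕ → ℕ) (j : ℕ) : 0 < ∑' k : ℕ, H a (k + j + 1) :=
  Summable.tsum_pos (summable_tail a j) (fun k => (H_pos a (k + j + 1)).le) 0 (H_pos a (0 + j + 1))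

lemma tail_gt (a : ℕ → ℕ) (j : ℕ) : H a (j + 1) < ∑' k : ℕ, H a (k + j + 1) := by
  rw [Summable.tsum_eq_zero_add (summable_tail a j)]
  simp only [Nat.zero_add]
  have : 0 < ∑' k : ℕ, H a (k + 1 + j + 1) := by
    have h := tail_pos a (j + 1)
    have he : ∀ k : ℕ, H a (k + (j + 1) + 1) = H a (k + 1 + j + 1) := fun k => by ring_nf
    rwa [tsum_congr he] at h
  linarith

/-- Strict monotonicity: larger digit at first difference ⇒ smaller sum. -/
lemma engelSum_lt {a b : ℕ → ℕ} (ha : ∀ k, 1 ≤ a k) (hb : ∀ k, 1 ≤ b k) (j : ℕ)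
    (hagree : ∀ i < j, a i = b i) (hj : b j < a j) : engelSum a < engelSum b := by
  rw [engelSum_eq ha, engelSum_eq hb,
    ← Summable.sum_add_tsum_nat_add j (summable_H a), ← Summable.sum_add_tsum_nat_add j (summable_H b)]
  have hhead : ∑ i ∈ Finset.range j, H a (i + 1) = ∑ i ∈ Finset.range j, H b (i + 1) :=
    Finset.sum_congr rfl fun i hi =>
      H_congr hagree (by have := Finset.mem_range.mp hi; omega)
  rw [hhead]
  refine (add_lt_add_iff_left _).mpr ?_
  have hQ : Q b j + 1 ≤ Q a j := by
    rw [Q_def, Q_def, Finset.sum_range_succ, Finset.sum_range_succ]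
    have hs : ∑ i ∈ Finset.range j, (a i - 1) = ∑ i ∈ Finset.range j, (b i - 1) :=
      Finset.sum_congr rfl fun i hi => by rw [hagree i (Finset.mem_range.mp hi)]
    rw [hs]
    have hbj := hb j
    omega
  have hQr : (Q b j : ℝ) ≤ (Q a j : ℝ) - 1 := by
    have : (Q b j : ℝ) + 1 ≤ (Q a j : ℝ) := by exact_mod_cast hQ
    linarith
  have hHj : H a j = H b j := H_congr hagree le_rfl
  calc ∑' k : ℕ, H a (k + j + 1) ≤ H a j / ((Q a j : ℝ) - 1) := tail_le a j
    _ ≤ H b j / (Q b j : ℝ) := by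
        rw [hHj]
        apply div_le_div_of_nonneg_left (H_pos b j).le (Q_pos_real b j)
        exact hQr
    _ = H b (j + 1) := by rw [H_succ]; ring
    _ < ∑' k : ℕ, H b (k + j + 1) := tail_gt b j

lemma engelSum_inj {a b : ℕ → ℕ} (ha : ∀ k, 1 ≤ a k) (hb : ∀ k, 1 ≤ b k)
    (h : engelSum a = engelSum b) : a = b := by
  funext k
  induction k using Nat.strong_induction_on with
  | _ k ih =>
    by_contra hne
    rcases Nat.lt_or_ge (a k) (b k) with h' | h'
    · exact absurd h (ne_of_gt (engelSum_lt hb ha k (fun i hi => (ih i hi).symm) h'))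
    · have h'' : b k < a k := lt_of_le_of_ne h' (fun e => hne e.symm)
      exact absurd h (ne_of_lt (engelSum_lt ha hb k (fun i hi => ih i hi) h''))

lemma EM_eval {a : ℕ → ℕ} (ha : ∀ k, 1 ≤ a k) : EM (engelSum a) = engelMinkowski a := by
  have h : ∃ c : ℕ → ℕ, (∀ k, 1 ≤ c k) ∧ engelSum c = engelSum a := ⟨a, ha, rfl⟩
  rw [EM, dif_pos h]
  obtain ⟨hc1, hc2⟩ := h.choose_spec
  rw [engelSum_inj hc1 ha hc2]

section Alt
variable {c : ℕ → ℝ}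

lemma geo_bound (hc : ∀ k, 0 < c k) (hh : ∀ k, c (k + 1) ≤ c k / 2) (k : ℕ) :
    c k ≤ c 0 * (1 / 2) ^ k := by
  induction k with
  | zero => simp
  | succ n ih =>
      calc c (n + 1) ≤ c n / 2 := hh n
        _ ≤ (c 0 * (1 / 2) ^ n) / 2 := by linarith
        _ = c 0 * (1 / 2) ^ (n + 1) := by ring

lemma summable_c (hc : ∀ k, 0 < c k) (hh : ∀ k, c (k + 1) ≤ c k / 2) : Summable c :=
  Summable.of_nonneg_of_le (fun k => (hc k).le) (geo_bound hc hh)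
    (((summable_geometric_of_lt_one (by norm_num) (by norm_num))).mul_left _)

lemma summable_alt (hc : ∀ k, 0 < c k) (hh : ∀ k, c (k + 1) ≤ c k / 2) :
    Summable (fun k => (-1 : ℝ) ^ k * c k) := by
  apply Summable.of_abs
  refine (summable_c hc hh).congr fun k => ?_
  rw [abs_mul, abs_pow, abs_neg, abs_one, one_pow, one_mul, abs_of_pos (hc k)]

lemma alt_pos (hc : ∀ k, 0 < c k) (hh : ∀ k, c (k + 1) ≤ c k / 2) :
    0 < ∑' k : ℕ, (-1 : ℝ) ^ k * c k := by
  have hsum := summable_alt hc hh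
  have hcs := summable_c hc hh
  have hinj2 : Function.Injective (fun k : ℕ => 2 * k) := fun m n h => by
    simp only at h; omega
  have hinj2' : Function.Injective (fun k : ℕ => 2 * k + 1) := fun m n h => by
    simp only at h; omega
  have he : Summable (fun k => ((-1 : ℝ) ^ (2 * k) * c (2 * k))) :=
    hsum.comp_injective hinj2
  have ho : Summable (fun k => ((-1 : ℝ) ^ (2 * k + 1) * c (2 * k + 1))) :=
    hsum.comp_injective hinj2'
  have hce : Summable (fun k => c (2 * k)) := hcs.comp_injective hinj2
  have hco : Summable (fun k => c (2 * k + 1)) := hcs.comp_injective hinj2'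
  have h1 : ∀ k : ℕ, ((-1 : ℝ) ^ (2 * k) * c (2 * k)) = c (2 * k) := fun k => by
    rw [pow_mul]; norm_num
  have h2 : ∀ k : ℕ, ((-1 : ℝ) ^ (2 * k + 1) * c (2 * k + 1)) = -c (2 * k + 1) := fun k => by
    rw [pow_succ, pow_mul]; norm_num
  have key : ∑' k : ℕ, c (2 * k + 1) < ∑' k : ℕ, c (2 * k) := by
    refine Summable.tsum_lt_tsum (i := 0) (fun k => ?_) ?_ hco hce
    · calc c (2 * k + 1) ≤ c (2 * k) / 2 := hh _
        _ ≤ c (2 * k) := by have := hc (2 * k); linarith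
    · have ha := hh 0
      have hb := hc 0
      simp only [Nat.mul_zero, Nat.zero_add] at *
      linarith
  rw [← tsum_even_add_odd (f := fun k : ℕ => (-1:ℝ)^k * c k) he ho, tsum_congr h1, tsum_congr h2, tsum_neg]
  linarith

lemma alt_shift (hc : ∀ k, 0 < c k) (hh : ∀ k, c (k + 1) ≤ c k / 2) :
    ∑' k : ℕ, (-1 : ℝ) ^ k * c k
      = c 0 - ∑' k : ℕ, (-1 : ℝ) ^ k * c (k + 1) := by
  rw [Summable.tsum_eq_zero_add (summable_alt hc hh)]
  simp only [pow_zero, one_mul]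
  have : ∀ k : ℕ, (-1 : ℝ) ^ (k + 1) * c (k + 1) = -((-1 : ℝ) ^ k * c (k + 1)) := fun k => by
    rw [pow_succ]; ring
  rw [tsum_congr this, tsum_neg]
  ring

lemma alt_lt (hc : ∀ k, 0 < c k) (hh : ∀ k, c (k + 1) ≤ c k / 2) :
    ∑' k : ℕ, (-1 : ℝ) ^ k * c k < c 0 := by
  rw [alt_shift hc hh]
  have h := alt_pos (c := fun k => c (k + 1)) (fun k => hc _) (fun k => hh _)
  have h' : 0 < ∑' k : ℕ, (-1 : ℝ) ^ k * c (k + 1) := by simpa using h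
  linarith

lemma alt_gt (hc : ∀ k, 0 < c k) (hh : ∀ k, c (k + 1) ≤ c k / 2) :
    c 0 - c 1 < ∑' k : ℕ, (-1 : ℝ) ^ k * c k := by
  rw [alt_shift hc hh]
  have h := alt_lt (c := fun k => c (k + 1)) (fun k => hc _) (fun k => hh _)
  have h' : ∑' k : ℕ, (-1 : ℝ) ^ k * c (k + 1) < c 1 := by simpa using h
  linarith

end Alt

noncomputable def cseq (a : ℕ → ℕ) (k : ℕ) : ℝ :=
  (2 : ℝ) ^ ((1 : ℤ) - ∑ i ∈ Finset.range (k + 1), (a i : ℤ))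

lemma two_zpow_le {e f : ℤ} (h : e ≤ f - 1) : (2 : ℝ) ^ e ≤ (2 : ℝ) ^ f / 2 := by
  have h2 : (2 : ℝ) ^ (f - 1) = 2 ^ f / 2 := by
    rw [zpow_sub_one₀ (two_ne_zero : (2 : ℝ) ≠ 0), div_eq_mul_inv]
  rw [← h2]
  exact zpow_le_zpow_right₀ one_le_two h

lemma cseq_pos (a : ℕ → ℕ) (k : ℕ) : 0 < cseq a k := zpow_pos (by norm_num) _

lemma cseq_half {a : ℕ → ℕ} (ha : ∀ k, 1 ≤ a k) (k : ℕ) :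
    cseq a (k + 1) ≤ cseq a k / 2 := by
  unfold cseq
  apply two_zpow_le
  rw [Finset.sum_range_succ]
  have : (1 : ℤ) ≤ (a (k + 1) : ℤ) := by exact_mod_cast ha (k + 1)
  omega

lemma engelMinkowski_eq (a : ℕ → ℕ) :
    engelMinkowski a = ∑' k : ℕ, (-1 : ℝ) ^ k * cseq a k := rfl

lemma cseq_congr {a b : ℕ → ℕ} {j : ℕ} (h : ∀ i < j, a i = b i) {k : ℕ} (hk : k < j) :
    cseq a k = cseq b k := by
  have hs : ∑ i ∈ Finset.range (k + 1), (a i : ℤ) = ∑ i ∈ Finset.range (k + 1), (b i : ℤ) :=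
    Finset.sum_congr rfl fun i hi => by
      have hik : i < k + 1 := Finset.mem_range.mp hi
      rw [h i (by omega)]
  unfold cseq
  rw [hs]

/-- Core comparison: first digit difference at index `j`, `b j < a j`. -/
lemma part2core {a b : ℕ → ℕ} (ha : ∀ k, 1 ≤ a k) (hb : ∀ k, 1 ≤ b k) (j : ℕ)
    (hagree : ∀ i < j, a i = b i) (hj : b j < a j) :
    (Even j → engelMinkowski a < engelMinkowski b) ∧
    (Odd j → engelMinkowski b < engelMinkowski a) := by
  have hfa : Summable (fun k => (-1 : ℝ) ^ k * cseq a k) :=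
    summable_alt (cseq_pos a) (cseq_half ha)
  have hfb : Summable (fun k => (-1 : ℝ) ^ k * cseq b k) :=
    summable_alt (cseq_pos b) (cseq_half hb)
  -- split both sums at j
  have hsplit : ∀ (x : ℕ → ℕ), Summable (fun k => (-1 : ℝ) ^ k * cseq x k) →
      engelMinkowski x = (∑ i ∈ Finset.range j, (-1 : ℝ) ^ i * cseq x i)
        + (-1 : ℝ) ^ j * ∑' k : ℕ, (-1 : ℝ) ^ k * cseq x (k + j) := by
    intro x hx
    rw [engelMinkowski_eq, ← Summable.sum_add_tsum_nat_add j hx]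
    congr 1
    calc ∑' k : ℕ, (-1 : ℝ) ^ (k + j) * cseq x (k + j)
        = ∑' k : ℕ, (-1 : ℝ) ^ j * ((-1 : ℝ) ^ k * cseq x (k + j)) :=
          tsum_congr fun k => by rw [pow_add]; ring
      _ = (-1 : ℝ) ^ j * ∑' k : ℕ, (-1 : ℝ) ^ k * cseq x (k + j) := tsum_mul_left
  -- tail comparison
  have hda : ∀ k, 0 < cseq a (k + j) := fun k => cseq_pos a _
  have hdb : ∀ k, 0 < cseq b (k + j) := fun k => cseq_pos b _
  have hha : ∀ k, cseq a (k + 1 + j) ≤ cseq a (k + j) / 2 := fun k => by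
    have := cseq_half ha (k + j); rwa [show k + j + 1 = k + 1 + j by ring] at this
  have hhb : ∀ k, cseq b (k + 1 + j) ≤ cseq b (k + j) / 2 := fun k => by
    have := cseq_half hb (k + j); rwa [show k + j + 1 = k + 1 + j by ring] at this
  have hDa : ∑' k : ℕ, (-1 : ℝ) ^ k * cseq a (k + j) < cseq a j := by
    have := alt_lt (c := fun k => cseq a (k + j)) hda hha
    simpa using this
  have hDb : cseq b j - cseq b (1 + j) < ∑' k : ℕ, (-1 : ℝ) ^ k * cseq b (k + j) := by
    have := alt_gt (c := fun k => cseq b (k + j)) hdb hhb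
    simpa using this
  -- middle inequality: cseq a j ≤ cseq b j / 2
  have hmid : cseq a j ≤ cseq b j / 2 := by
    unfold cseq
    apply two_zpow_le
    rw [Finset.sum_range_succ, Finset.sum_range_succ]
    have hs : ∑ i ∈ Finset.range j, (a i : ℤ) = ∑ i ∈ Finset.range j, (b i : ℤ) :=
      Finset.sum_congr rfl fun i hi => by rw [hagree i (Finset.mem_range.mp hi)]
    have hj' : (b j : ℤ) + 1 ≤ (a j : ℤ) := by exact_mod_cast hj
    omega
  have hb1 : cseq b (1 + j) ≤ cseq b j / 2 := by
    have := cseq_half hb j; rwa [show j + 1 = 1 + j by ring] at this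
  have hD : ∑' k : ℕ, (-1 : ℝ) ^ k * cseq a (k + j)
      < ∑' k : ℕ, (-1 : ℝ) ^ k * cseq b (k + j) := by
    have h1 : cseq b j / 2 ≤ cseq b j - cseq b (1 + j) := by linarith
    linarith
  have hhead : ∑ i ∈ Finset.range j, (-1 : ℝ) ^ i * cseq a i
      = ∑ i ∈ Finset.range j, (-1 : ℝ) ^ i * cseq b i :=
    Finset.sum_congr rfl fun i hi => by rw [cseq_congr hagree (Finset.mem_range.mp hi)]
  rw [hsplit a hfa, hsplit b hfb, hhead]
  constructor
  · intro hev
    rw [hev.neg_one_pow]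
    simpa using hD
  · intro hod
    rw [hod.neg_one_pow]
    have := neg_lt_neg hD
    simp only [neg_one_mul]
    linarith

open Filter Topology

noncomputable def gx (x : ℝ) : ℕ → ℝ
  | 0 => x
  | k + 1 => (⌊1 / gx x k⌋₊ + 1) * gx x k - 1

noncomputable def gq (x : ℝ) (k : ℕ) : ℕ := ⌊1 / gx x k⌋₊ + 1

noncomputable def gd (x : ℝ) : ℕ → ℕ
  | 0 => gq x 0 - 1
  | k + 1 => gq x (k + 1) - gq x k + 1

variable {x : ℝ}

lemma gx_mem (hx0 : 0 < x) (hx1 : x ≤ 1) (k : ℕ) : 0 < gx x k ∧ gx x k ≤ 1 := by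
  induction k with
  | zero => exact ⟨hx0, hx1⟩
  | succ k ih =>
      obtain ⟨hy0, hy1⟩ := ih
      set y := gx x k with hy
      have hfl : ((⌊1 / y⌋₊ : ℝ)) ≤ 1 / y := Nat.floor_le (by positivity)
      have hfl2 : 1 / y < (⌊1 / y⌋₊ : ℝ) + 1 := Nat.lt_floor_add_one _
      have hgx : gx x (k + 1) = ((⌊1 / y⌋₊ : ℝ) + 1) * y - 1 := by
        show ((⌊1 / gx x k⌋₊ : ℝ) + 1) * gx x k - 1 = _
        rw [← hy]
      constructor
      · rw [hgx]
        have : (1 / y) * y < ((⌊1 / y⌋₊ : ℝ) + 1) * y := by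
          apply mul_lt_mul_of_pos_right hfl2 hy0
        rw [one_div_mul_cancel (ne_of_gt hy0)] at this
        linarith
      · rw [hgx]
        have : (⌊1 / y⌋₊ : ℝ) * y ≤ (1 / y) * y := mul_le_mul_of_nonneg_right hfl hy0.le
        rw [one_div_mul_cancel (ne_of_gt hy0)] at this
        nlinarith

lemma one_le_floor (hx0 : 0 < x) (hx1 : x ≤ 1) (k : ℕ) : 1 ≤ ⌊1 / gx x k⌋₊ := by
  obtain ⟨hy0, hy1⟩ := gx_mem hx0 hx1 k
  apply Nat.le_floor
  rw [le_div_iff₀ hy0]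
  simpa using hy1

lemma two_le_gq (hx0 : 0 < x) (hx1 : x ≤ 1) (k : ℕ) : 2 ≤ gq x k := by
  have := one_le_floor hx0 hx1 k; unfold gq; omega

lemma gq_mono (hx0 : 0 < x) (hx1 : x ≤ 1) : Monotone (gq x) := by
  apply monotone_nat_of_le_succ
  intro k
  obtain ⟨hy0, hy1⟩ := gx_mem hx0 hx1 k
  obtain ⟨hz0, _⟩ := gx_mem hx0 hx1 (k + 1)
  set y := gx x k with hy
  have hfl : ((⌊1 / y⌋₊ : ℝ)) ≤ 1 / y := Nat.floor_le (by positivity)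
  have hgx : gx x (k + 1) = ((⌊1 / y⌋₊ : ℝ) + 1) * y - 1 := by
    show ((⌊1 / gx x k⌋₊ : ℝ) + 1) * gx x k - 1 = _
    rw [← hy]
  have hny : (⌊1 / y⌋₊ : ℝ) * y ≤ 1 := by
    have : (⌊1 / y⌋₊ : ℝ) * y ≤ (1 / y) * y := mul_le_mul_of_nonneg_right hfl hy0.le
    rwa [one_div_mul_cancel (ne_of_gt hy0)] at this
  have key : (⌊1 / y⌋₊ : ℝ) ≤ 1 / gx x (k + 1) := by
    rw [le_div_iff₀ hz0, hgx]
    nlinarith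
  have h5 : ⌊1 / y⌋₊ ≤ ⌊1 / gx x (k + 1)⌋₊ := Nat.le_floor key
  unfold gq
  rw [← hy]
  omega

lemma one_le_gd (hx0 : 0 < x) (hx1 : x ≤ 1) (k : ℕ) : 1 ≤ gd x k := by
  cases k with
  | zero =>
      have := two_le_gq hx0 hx1 0
      show 1 ≤ gq x 0 - 1
      omega
  | succ k =>
      show 1 ≤ gq x (k + 1) - gq x k + 1
      omega

lemma Q_gd (hx0 : 0 < x) (hx1 : x ≤ 1) (m : ℕ) : Q (gd x) m = gq x m := by
  induction m with
  | zero =>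
      rw [Q_def, Finset.sum_range_one]
      show 2 + (gq x 0 - 1 - 1) = gq x 0
      have := two_le_gq hx0 hx1 0
      omega
  | succ m ih =>
      rw [Q_succ, ih]
      show gq x m + (gq x (m + 1) - gq x m + 1 - 1) = gq x (m + 1)
      have h2 : gq x m ≤ gq x (m + 1) := gq_mono hx0 hx1 (by omega)
      omega

lemma gd_invariant (hx0 : 0 < x) (hx1 : x ≤ 1) (K : ℕ) :
    x = (∑ k ∈ Finset.range K, H (gd x) (k + 1)) + H (gd x) K * gx x K := by
  induction K with
  | zero => simp [H_zero, gx]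
  | succ K ih =>
      rw [Finset.sum_range_succ]
      have hq : (Q (gd x) K : ℝ) = (⌊1 / gx x K⌋₊ : ℝ) + 1 := by
        rw [Q_gd hx0 hx1]; unfold gq; push_cast; ring
      have hqpos : (0 : ℝ) < (Q (gd x) K : ℝ) := by
        have := two_le_Q (gd x) K
        exact_mod_cast by omega
      have hgx : gx x (K + 1) = (Q (gd x) K : ℝ) * gx x K - 1 := by
        show ((⌊1 / gx x K⌋₊ : ℝ) + 1) * gx x K - 1 = _
        rw [hq]
      have key : H (gd x) K * gx x K
          = H (gd x) (K + 1) + H (gd x) (K + 1) * gx x (K + 1) := by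
        rw [H_succ, hgx]
        field_simp
        ring
      linarith [ih, key]

lemma engelSum_gd (hx0 : 0 < x) (hx1 : x ≤ 1) : engelSum (gd x) = x := by
  rw [engelSum_eq (one_le_gd hx0 hx1)]
  have hsum := summable_H (gd x)
  have h1 : Tendsto (fun K => ∑ k ∈ Finset.range K, H (gd x) (k + 1)) atTop
      (𝓝 (∑' k : ℕ, H (gd x) (k + 1))) := hsum.hasSum.tendsto_sum_nat
  have h2 : Tendsto (fun K => ∑ k ∈ Finset.range K, H (gd x) (k + 1)) atTop (𝓝 x) := by
    have he : ∀ K, ∑ k ∈ Finset.range K, H (gd x) (k + 1) = x - H (gd x) K * gx x K :=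
      fun K => by have := gd_invariant hx0 hx1 K; linarith
    simp only [he]
    have hz : Tendsto (fun K : ℕ => H (gd x) K * gx x K) atTop (𝓝 0) := by
      apply squeeze_zero (fun K => ?_) (fun K => ?_)
        (tendsto_pow_atTop_nhds_zero_of_lt_one (by norm_num : (0:ℝ) ≤ 1/2) (by norm_num))
      · have := H_pos (gd x) K
        have := (gx_mem hx0 hx1 K).1
        positivity
      · calc H (gd x) K * gx x K ≤ H (gd x) K * 1 := by
              apply mul_le_mul_of_nonneg_left (gx_mem hx0 hx1 K).2 (H_pos (gd x) K).le
          _ ≤ (1/2) ^ K := by rw [mul_one]; exact H_le (gd x) K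
    have := (tendsto_const_nhds (x := x) (f := atTop (α := ℕ))).sub hz
    simpa using this
  exact tendsto_nhds_unique h1 h2


lemma engelSum_close {a b : ℕ → ℕ} (ha : ∀ k, 1 ≤ a k) (hb : ∀ k, 1 ≤ b k) (j : ℕ)
    (hagree : ∀ i < j, a i = b i) : engelSum b - engelSum a < (1 / 2) ^ j := by
  rw [engelSum_eq ha, engelSum_eq hb,
    ← Summable.sum_add_tsum_nat_add j (summable_H a), ← Summable.sum_add_tsum_nat_add j (summable_H b)]
  have hhead : ∑ i ∈ Finset.range j, H a (i + 1) = ∑ i ∈ Finset.range j, H b (i + 1) :=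
    Finset.sum_congr rfl fun i hi =>
      H_congr hagree (by have := Finset.mem_range.mp hi; omega)
  rw [hhead]
  have h1 : ∑' k : ℕ, H b (k + j + 1) ≤ H b j / ((Q b j : ℝ) - 1) := tail_le b j
  have hq : (2 : ℝ) ≤ (Q b j : ℝ) := by exact_mod_cast two_le_Q b j
  have h2 : H b j / ((Q b j : ℝ) - 1) ≤ H b j :=
    div_le_self (H_pos b j).le (by linarith)
  have h3 : 0 < ∑' k : ℕ, H a (k + j + 1) := tail_pos a j
  have h4 : H b j ≤ (1 / 2) ^ j := H_le b j
  linarith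

end EMAux

open EMAux

/-- `?_{EM}` is nowhere monotonic on `(0,1)`: every subinterval contains points
where it increases and points where it decreases.  Precisely, if the digit
sequences of `x₁ < x₂` first differ at position `p` with `a_p(x₂) < a_p(x₁)`,
then `?_{EM}(x₂) > ?_{EM}(x₁)` for odd `p` and `?_{EM}(x₂) < ?_{EM}(x₁)` for even `p`. -/
theorem engel_minkowski_nowhere_monotone :
    (∀ s t : ℝ, 0 ≤ s → t ≤ 1 → s < t →
      (∃ x₁ x₂, x₁ ∈ Set.Ioo s t ∧ x₂ ∈ Set.Ioo s t ∧ x₁ < x₂ ∧ EM x₁ < EM x₂) ∧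
      (∃ y₁ y₂, y₁ ∈ Set.Ioo s t ∧ y₂ ∈ Set.Ioo s t ∧ y₁ < y₂ ∧ EM y₂ < EM y₁)) ∧
    (∀ (a b : ℕ → ℕ), (∀ k, 1 ≤ a k) → (∀ k, 1 ≤ b k) → ∀ p : ℕ, 1 ≤ p →
      (∀ i, i < p - 1 → a i = b i) → b (p - 1) < a (p - 1) →
      engelSum a < engelSum b →
      (Odd p → engelMinkowski a < engelMinkowski b) ∧
      (Even p → engelMinkowski b < engelMinkowski a)) := by
  constructor
  · intro s t hs ht hst
    set x : ℝ := (s + t) / 2 with hxdef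
    have hxs : s < x := by rw [hxdef]; linarith
    have hxt : x < t := by rw [hxdef]; linarith
    have hx0 : 0 < x := lt_of_le_of_lt hs hxs
    have hx1 : x ≤ 1 := le_of_lt (lt_of_lt_of_le hxt ht)
    have ha : ∀ k, 1 ≤ gd x k := one_le_gd hx0 hx1
    have hax : engelSum (gd x) = x := engelSum_gd hx0 hx1
    obtain ⟨N, hN⟩ : ∃ N : ℕ, (1 / 2 : ℝ) ^ N < min (x - s) (t - x) := by
      apply exists_pow_lt_of_lt_one
      · apply lt_min <;> linarith
      · norm_num
    have main : ∀ j : ℕ, N ≤ j → ∃ w, w ∈ Set.Ioo s t ∧ w < x ∧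
        (Even j → EM w < EM x) ∧ (Odd j → EM x < EM w) := by
      intro j hj
      set A : ℕ → ℕ := Function.update (gd x) j (gd x j + 1) with hAdef
      have hA1 : ∀ k, 1 ≤ A k := by
        intro k
        rcases eq_or_ne k j with h | h
        · rw [hAdef, h, Function.update_self]; omega
        · rw [hAdef, Function.update_of_ne h]; exact ha k
      have hagree : ∀ i < j, A i = gd x i := fun i hi => by
        rw [hAdef, Function.update_of_ne (Nat.ne_of_lt hi)]
      have hAj : gd x j < A j := by
        rw [hAdef, Function.update_self]; omega
      have hlt : engelSum A < engelSum (gd x) := engelSum_lt hA1 ha j hagree hAj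
      have hclose : engelSum (gd x) - engelSum A < (1 / 2) ^ j :=
        engelSum_close hA1 ha j hagree
      have hpow : ((1 : ℝ) / 2) ^ j ≤ (1 / 2) ^ N :=
        pow_le_pow_of_le_one (by norm_num) (by norm_num) hj
      have hmem : engelSum A ∈ Set.Ioo s t := by
        constructor
        · have := lt_of_le_of_lt hpow hN
          have h2 : (1 / 2 : ℝ) ^ j < x - s := lt_of_lt_of_le this (min_le_left _ _)
          rw [hax] at hclose
          linarith
        · rw [hax] at hlt
          linarith
      obtain ⟨hpc1, hpc2⟩ := part2core hA1 ha j hagree hAj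
      refine ⟨engelSum A, hmem, by rw [hax] at hlt; exact hlt, ?_, ?_⟩
      · intro hev
        rw [← hax, EM_eval hA1, EM_eval ha]
        exact hpc1 hev
      · intro hod
        rw [← hax, EM_eval hA1, EM_eval ha]
        exact hpc2 hod
    have hxmem : x ∈ Set.Ioo s t := ⟨hxs, hxt⟩
    constructor
    · obtain ⟨w, hw, hwx, he, _⟩ := main (2 * N) (by omega)
      exact ⟨w, x, hw, hxmem, hwx, he ⟨N, by ring⟩⟩
    · obtain ⟨w, hw, hwx, _, ho⟩ := main (2 * N + 1) (by omega)
      exact ⟨w, x, hw, hxmem, hwx, ho ⟨N, rfl⟩⟩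
  · intro a b ha hb p hp hagree hdig _
    obtain ⟨h1, h2⟩ := part2core ha hb (p - 1) hagree hdig
    constructor
    · intro hodd
      exact h1 (Nat.Odd.sub_odd hodd odd_one)
    · intro heven
      exact h2 (Nat.Even.sub_odd hp heven odd_one)
end
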